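/- There exists a constant C > 0 such that for every integer n ≥ 3, ∑ over pairs of positive integers (x₁, x₂) with x₁ + 2x₂ ≤ n - 1 of x₁^(-5/7)·x₂^(-5/7)·(n - x₁ - 2x₂)^(-5/7) ≤ C·n^(-1/7). -/

import Mathlib

open Finset Real

private lemma sumBound (n : ℕ) :
    ∑ k ∈ Finset.Icc 1 n, (k : ℝ) ^ (-5/7 : ℝ) ≤ (7/2) * (n : ℝ) ^ ((2:ℝ)/7) := by
  induction n with
  | zero => simp
  | succ n ih =>
    rw [Finset.sum_Icc_succ_top (by omega)]
    have hn1 : (0:ℝ) < (n:ℝ) + 1 := by positivity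
    have hb : ((n:ℝ) / ((n:ℝ)+1)) ^ ((2:ℝ)/7) ≤ 1 - (2/7) / ((n:ℝ)+1) := by
      have hs : (-1:ℝ) ≤ -(1/((n:ℝ)+1)) := by
        rw [neg_le_neg_iff]
        rw [div_le_one hn1]
        have : (0:ℝ) ≤ (n:ℝ) := Nat.cast_nonneg n
        linarith
      have h := rpow_one_add_le_one_add_mul_self (s := -(1/((n:ℝ)+1)))
        (p := (2:ℝ)/7) hs (by norm_num) (by norm_num)
      have h1 : (1 : ℝ) + -(1/((n:ℝ)+1)) = (n:ℝ)/((n:ℝ)+1) := by field_simp; ring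
      rw [h1] at h
      calc ((n:ℝ)/((n:ℝ)+1))^((2:ℝ)/7) ≤ 1 + (2:ℝ)/7 * -(1/((n:ℝ)+1)) := h
        _ = 1 - (2/7)/((n:ℝ)+1) := by ring
    have hm5 : ((n:ℝ)+1)^(-5/7:ℝ) = ((n:ℝ)+1)^((2:ℝ)/7)/((n:ℝ)+1) := by
      rw [show (-5/7:ℝ) = (2:ℝ)/7 - 1 by norm_num, Real.rpow_sub hn1, Real.rpow_one]
    have hkey : (n:ℝ)^((2:ℝ)/7) ≤ ((n:ℝ)+1)^((2:ℝ)/7) - (2/7) * (((n:ℝ)+1)^(-5/7:ℝ)) := by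
      have hsplit : (n:ℝ)^((2:ℝ)/7)
          = ((n:ℝ)+1)^((2:ℝ)/7) * ((n:ℝ)/((n:ℝ)+1))^((2:ℝ)/7) := by
        rw [← Real.mul_rpow (by positivity) (by positivity)]
        congr 1
        field_simp
      rw [hsplit, hm5]
      have h2 := mul_le_mul_of_nonneg_left hb (le_of_lt (Real.rpow_pos_of_pos hn1 ((2:ℝ)/7)))
      calc ((n:ℝ)+1)^((2:ℝ)/7) * ((n:ℝ)/((n:ℝ)+1))^((2:ℝ)/7)
          ≤ ((n:ℝ)+1)^((2:ℝ)/7) * (1 - (2/7)/((n:ℝ)+1)) := h2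
        _ = ((n:ℝ)+1)^((2:ℝ)/7) - 2/7 * (((n:ℝ)+1)^((2:ℝ)/7)/((n:ℝ)+1)) := by ring
    have hcast : ((n+1 : ℕ) : ℝ) = (n:ℝ) + 1 := by push_cast; ring
    rw [hcast]
    linarith [ih, hkey]

private lemma pairSum (n : ℕ) (s : Finset (ℕ × ℕ)) (e : ℕ × ℕ → ℕ × ℕ)
    (hinj : ∀ p ∈ s, ∀ q ∈ s, e p = e q → p = q)
    (hmem : ∀ p ∈ s, e p ∈ Finset.Icc 1 n ×ˢ Finset.Icc 1 n) :
    ∑ p ∈ s, ((e p).1 : ℝ) ^ (-5/7 : ℝ) * ((e p).2 : ℝ) ^ (-5/7 : ℝ)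
      ≤ ((7/2) * (n : ℝ) ^ ((2:ℝ)/7)) ^ 2 := by
  classical
  have h1 : ∑ p ∈ s, ((e p).1 : ℝ) ^ (-5/7 : ℝ) * ((e p).2 : ℝ) ^ (-5/7 : ℝ)
      = ∑ q ∈ s.image e, (q.1 : ℝ) ^ (-5/7 : ℝ) * (q.2 : ℝ) ^ (-5/7 : ℝ) :=
    (Finset.sum_image (f := fun q : ℕ × ℕ => (q.1 : ℝ) ^ (-5/7 : ℝ) * (q.2 : ℝ) ^ (-5/7 : ℝ)) hinj).symm
  rw [h1]
  have h2 : ∑ q ∈ s.image e, (q.1 : ℝ) ^ (-5/7 : ℝ) * (q.2 : ℝ) ^ (-5/7 : ℝ)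
      ≤ ∑ q ∈ Finset.Icc 1 n ×ˢ Finset.Icc 1 n, (q.1 : ℝ) ^ (-5/7 : ℝ) * (q.2 : ℝ) ^ (-5/7 : ℝ) := by
    apply Finset.sum_le_sum_of_subset_of_nonneg
    · exact Finset.image_subset_iff.mpr hmem
    · intro q _ _
      positivity
  refine h2.trans ?_
  rw [Finset.sum_product]
  have hprod : ∑ x ∈ Finset.Icc 1 n, ∑ y ∈ Finset.Icc 1 n,
      ((x:ℝ) ^ (-5/7 : ℝ) * (y:ℝ) ^ (-5/7 : ℝ))
      = (∑ k ∈ Finset.Icc 1 n, (k:ℝ) ^ (-5/7 : ℝ)) * (∑ k ∈ Finset.Icc 1 n, (k:ℝ) ^ (-5/7 : ℝ)) :=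
    (Finset.sum_mul_sum _ _ _ _).symm
  rw [hprod]
  have hs := sumBound n
  have hnn : 0 ≤ ∑ k ∈ Finset.Icc 1 n, (k:ℝ)^(-5/7:ℝ) :=
    Finset.sum_nonneg (fun k _ => by positivity)
  rw [sq]
  exact mul_le_mul hs hs hnn (by positivity)

theorem stmt14 :
    ∃ C : ℝ, 0 < C ∧ ∀ n : ℕ, 3 ≤ n →
      (∑' p : {p : ℕ × ℕ // 0 < p.1 ∧ 0 < p.2 ∧ p.1 + 2 * p.2 ≤ n - 1},
        ((p : ℕ × ℕ).1 : ℝ) ^ (-5/7 : ℝ) * ((p : ℕ × ℕ).2 : ℝ) ^ (-5/7 : ℝ) *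
        ((n : ℝ) - (p : ℕ × ℕ).1 - 2 * (p : ℕ × ℕ).2) ^ (-5/7 : ℝ)) ≤
        C * (n : ℝ) ^ (-1/7 : ℝ) := by
  classical
  refine ⟨441/2, by norm_num, fun n hn => ?_⟩
  have hn0 : (0:ℝ) < (n:ℝ) := by
    have : (3:ℝ) ≤ (n:ℝ) := by exact_mod_cast hn
    linarith
  set s : Finset (ℕ × ℕ) := (Finset.Icc 1 n ×ˢ Finset.Icc 1 n).filter
    (fun p => 0 < p.1 ∧ 0 < p.2 ∧ p.1 + 2*p.2 ≤ n - 1) with hs_def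
  have hmem_s : ∀ p, p ∈ s ↔ (1 ≤ p.1 ∧ p.1 ≤ n ∧ 1 ≤ p.2 ∧ p.2 ≤ n ∧ p.1 + 2*p.2 ≤ n - 1) := by
    intro p
    simp only [hs_def, Finset.mem_filter, Finset.mem_product, Finset.mem_Icc]
    omega
  have hset : {p : ℕ × ℕ | 0 < p.1 ∧ 0 < p.2 ∧ p.1 + 2*p.2 ≤ n - 1} = ↑s := by
    ext p
    simp only [Set.mem_setOf_eq, Finset.coe_filter, hs_def, Finset.mem_product, Finset.mem_Icc]
    omega
  -- the natural "third coordinate"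
  set m : ℕ × ℕ → ℕ := fun p => n - p.1 - 2*p.2 with hm_def
  have htsum : (∑' p : {p : ℕ × ℕ // 0 < p.1 ∧ 0 < p.2 ∧ p.1 + 2 * p.2 ≤ n - 1},
        ((p : ℕ × ℕ).1 : ℝ) ^ (-5/7 : ℝ) * ((p : ℕ × ℕ).2 : ℝ) ^ (-5/7 : ℝ) *
        ((n : ℝ) - (p : ℕ × ℕ).1 - 2 * (p : ℕ × ℕ).2) ^ (-5/7 : ℝ))
      = ∑ p ∈ s, ((p.1 : ℝ) ^ (-5/7 : ℝ) * (p.2 : ℝ) ^ (-5/7 : ℝ) *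
          ((n : ℝ) - (p.1:ℝ) - 2 * (p.2:ℝ)) ^ (-5/7 : ℝ)) := by
    exact (tsum_congr_set_coe (fun p : ℕ × ℕ => (p.1 : ℝ) ^ (-5/7 : ℝ) * (p.2 : ℝ) ^ (-5/7 : ℝ) *
          ((n : ℝ) - (p.1:ℝ) - 2 * (p.2:ℝ)) ^ (-5/7 : ℝ)) hset).trans
      (Finset.tsum_subtype' s (fun p : ℕ × ℕ => (p.1 : ℝ) ^ (-5/7 : ℝ) * (p.2 : ℝ) ^ (-5/7 : ℝ) *
        ((n : ℝ) - (p.1:ℝ) - 2 * (p.2:ℝ)) ^ (-5/7 : ℝ)))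
  rw [htsum]
  have hcast : ∀ p ∈ s, ((n : ℝ) - (p.1:ℝ) - 2 * (p.2:ℝ)) = ((m p : ℕ) : ℝ) := by
    intro p hp
    rw [hmem_s] at hp
    have h1 : (m p : ℕ) + p.1 + 2*p.2 = n := by simp only [hm_def]; omega
    have : ((m p : ℕ) : ℝ) + (p.1:ℝ) + 2*(p.2:ℝ) = (n:ℝ) := by exact_mod_cast congrArg (Nat.cast : ℕ → ℝ) h1
    linarith
  have hsum_congr : ∑ p ∈ s, ((p.1 : ℝ) ^ (-5/7 : ℝ) * (p.2 : ℝ) ^ (-5/7 : ℝ) *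
          ((n : ℝ) - (p.1:ℝ) - 2 * (p.2:ℝ)) ^ (-5/7 : ℝ))
      = ∑ p ∈ s, ((p.1 : ℝ) ^ (-5/7 : ℝ) * (p.2 : ℝ) ^ (-5/7 : ℝ) *
          ((m p : ℕ) : ℝ) ^ (-5/7 : ℝ)) := by
    apply Finset.sum_congr rfl
    intro p hp
    rw [hcast p hp]
  rw [hsum_congr]
  set D : ℝ := 6 * (n:ℝ) ^ (-5/7 : ℝ) with hD_def
  have hD0 : 0 ≤ D := by positivity
  have hD : ((n:ℝ)/6) ^ (-5/7 : ℝ) ≤ D := by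
    have e1 : ((n:ℝ)/6) ^ (-5/7 : ℝ) = (6:ℝ)^((5:ℝ)/7) * (n:ℝ)^(-5/7 : ℝ) := by
      rw [div_eq_mul_inv, Real.mul_rpow (le_of_lt hn0) (by norm_num),
        Real.inv_rpow (by norm_num), show (-5/7:ℝ) = -((5:ℝ)/7) by norm_num,
        Real.rpow_neg (by norm_num : (0:ℝ) ≤ 6), inv_inv]
      ring
    rw [e1, hD_def]
    have h6 : (6:ℝ)^((5:ℝ)/7) ≤ 6 := by
      calc (6:ℝ)^((5:ℝ)/7) ≤ (6:ℝ)^(1:ℝ) :=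
        Real.rpow_le_rpow_of_exponent_le (by norm_num) (by norm_num)
      _ = 6 := Real.rpow_one 6
    exact mul_le_mul_of_nonneg_right h6 (by positivity)
  -- pointwise bound
  have hpoint : ∀ p ∈ s, (p.1 : ℝ) ^ (-5/7 : ℝ) * (p.2 : ℝ) ^ (-5/7 : ℝ) *
        ((m p : ℕ) : ℝ) ^ (-5/7 : ℝ)
      ≤ D * ((p.2 : ℝ) ^ (-5/7 : ℝ) * ((m p : ℕ) : ℝ) ^ (-5/7 : ℝ)
           + (p.1 : ℝ) ^ (-5/7 : ℝ) * ((m p : ℕ) : ℝ) ^ (-5/7 : ℝ)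
           + (p.1 : ℝ) ^ (-5/7 : ℝ) * (p.2 : ℝ) ^ (-5/7 : ℝ)) := by
    intro p hp
    have hps := (hmem_s p).mp hp
    have hbig : n ≤ 6 * p.1 ∨ n ≤ 6 * p.2 ∨ n ≤ 6 * (m p) := by
      simp only [hm_def]; omega
    have hn6 : (0:ℝ) < (n:ℝ)/6 := by positivity
    have hA : (0:ℝ) ≤ (p.1:ℝ)^(-5/7:ℝ) := by positivity
    have hB : (0:ℝ) ≤ (p.2:ℝ)^(-5/7:ℝ) := by positivity
    have hC : (0:ℝ) ≤ ((m p : ℕ):ℝ)^(-5/7:ℝ) := by positivity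
    rcases hbig with h | h | h
    · have t1 : (p.1:ℝ)^(-5/7:ℝ) ≤ D := by
        refine le_trans (Real.rpow_le_rpow_of_nonpos hn6 ?_ (by norm_num)) hD
        rw [div_le_iff₀ (by norm_num : (0:ℝ) < 6)]
        exact_mod_cast (by omega : n ≤ p.1 * 6)
      calc (p.1 : ℝ) ^ (-5/7 : ℝ) * (p.2 : ℝ) ^ (-5/7 : ℝ) * ((m p : ℕ) : ℝ) ^ (-5/7 : ℝ)
          = (p.1 : ℝ) ^ (-5/7 : ℝ) * ((p.2 : ℝ) ^ (-5/7 : ℝ) * ((m p : ℕ) : ℝ) ^ (-5/7 : ℝ)) := by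
            ring
        _ ≤ D * ((p.2 : ℝ) ^ (-5/7 : ℝ) * ((m p : ℕ) : ℝ) ^ (-5/7 : ℝ)) :=
            mul_le_mul_of_nonneg_right t1 (by positivity)
        _ ≤ _ := by
            apply mul_le_mul_of_nonneg_left _ hD0
            nlinarith
    · have t1 : (p.2:ℝ)^(-5/7:ℝ) ≤ D := by
        refine le_trans (Real.rpow_le_rpow_of_nonpos hn6 ?_ (by norm_num)) hD
        rw [div_le_iff₀ (by norm_num : (0:ℝ) < 6)]
        exact_mod_cast (by omega : n ≤ p.2 * 6)
      calc (p.1 : ℝ) ^ (-5/7 : ℝ) * (p.2 : ℝ) ^ (-5/7 : ℝ) * ((m p : ℕ) : ℝ) ^ (-5/7 : ℝ)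
          = (p.2 : ℝ) ^ (-5/7 : ℝ) * ((p.1 : ℝ) ^ (-5/7 : ℝ) * ((m p : ℕ) : ℝ) ^ (-5/7 : ℝ)) := by
            ring
        _ ≤ D * ((p.1 : ℝ) ^ (-5/7 : ℝ) * ((m p : ℕ) : ℝ) ^ (-5/7 : ℝ)) :=
            mul_le_mul_of_nonneg_right t1 (by positivity)
        _ ≤ _ := by
            apply mul_le_mul_of_nonneg_left _ hD0
            nlinarith
    · have t1 : ((m p : ℕ):ℝ)^(-5/7:ℝ) ≤ D := by
        refine le_trans (Real.rpow_le_rpow_of_nonpos hn6 ?_ (by norm_num)) hD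
        rw [div_le_iff₀ (by norm_num : (0:ℝ) < 6)]
        exact_mod_cast (by omega : n ≤ (m p) * 6)
      calc (p.1 : ℝ) ^ (-5/7 : ℝ) * (p.2 : ℝ) ^ (-5/7 : ℝ) * ((m p : ℕ) : ℝ) ^ (-5/7 : ℝ)
          = ((m p : ℕ) : ℝ) ^ (-5/7 : ℝ) * ((p.1 : ℝ) ^ (-5/7 : ℝ) * (p.2 : ℝ) ^ (-5/7 : ℝ)) := by
            ring
        _ ≤ D * ((p.1 : ℝ) ^ (-5/7 : ℝ) * (p.2 : ℝ) ^ (-5/7 : ℝ)) :=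
            mul_le_mul_of_nonneg_right t1 (by positivity)
        _ ≤ _ := by
            apply mul_le_mul_of_nonneg_left _ hD0
            nlinarith
  have hstep1 := Finset.sum_le_sum hpoint
  refine le_trans hstep1 ?_
  -- split the sum into three and bound each by pairSum
  set B : ℝ := ((7/2) * (n : ℝ) ^ ((2:ℝ)/7)) ^ 2 with hB_def
  have hS1 : ∑ p ∈ s, (p.2 : ℝ) ^ (-5/7 : ℝ) * ((m p : ℕ) : ℝ) ^ (-5/7 : ℝ) ≤ B := by
    have := pairSum n s (fun p => (p.2, m p)) ?_ ?_
    · exact this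
    · intro p hp q hq he
      have hps := (hmem_s p).mp hp
      have hqs := (hmem_s q).mp hq
      simp only [Prod.mk.injEq, hm_def] at he
      have : p.1 = q.1 ∧ p.2 = q.2 := by omega
      exact Prod.ext this.1 this.2
    · intro p hp
      have hps := (hmem_s p).mp hp
      simp only [Finset.mem_product, Finset.mem_Icc, hm_def]
      omega
  have hS2 : ∑ p ∈ s, (p.1 : ℝ) ^ (-5/7 : ℝ) * ((m p : ℕ) : ℝ) ^ (-5/7 : ℝ) ≤ B := by
    have := pairSum n s (fun p => (p.1, m p)) ?_ ?_
    · exact this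
    · intro p hp q hq he
      have hps := (hmem_s p).mp hp
      have hqs := (hmem_s q).mp hq
      simp only [Prod.mk.injEq, hm_def] at he
      have : p.1 = q.1 ∧ p.2 = q.2 := by omega
      exact Prod.ext this.1 this.2
    · intro p hp
      have hps := (hmem_s p).mp hp
      simp only [Finset.mem_product, Finset.mem_Icc, hm_def]
      omega
  have hS3 : ∑ p ∈ s, (p.1 : ℝ) ^ (-5/7 : ℝ) * (p.2 : ℝ) ^ (-5/7 : ℝ) ≤ B := by
    have := pairSum n s id (fun p _ q _ h => h) ?_
    · exact this
    · intro p hp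
      have hps := (hmem_s p).mp hp
      simp only [Finset.mem_product, Finset.mem_Icc, id]
      omega
  have hsplit : ∑ p ∈ s, D * ((p.2 : ℝ) ^ (-5/7 : ℝ) * ((m p : ℕ) : ℝ) ^ (-5/7 : ℝ)
           + (p.1 : ℝ) ^ (-5/7 : ℝ) * ((m p : ℕ) : ℝ) ^ (-5/7 : ℝ)
           + (p.1 : ℝ) ^ (-5/7 : ℝ) * (p.2 : ℝ) ^ (-5/7 : ℝ))
      ≤ D * (3 * B) := by
    rw [← Finset.mul_sum]
    apply mul_le_mul_of_nonneg_left _ hD0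
    rw [Finset.sum_add_distrib, Finset.sum_add_distrib]
    linarith [hS1, hS2, hS3]
  refine le_trans hsplit ?_
  -- final computation
  have hfin : D * (3 * B) = 441/2 * (n : ℝ) ^ (-1/7 : ℝ) := by
    rw [hD_def, hB_def]
    have h1 : (n:ℝ)^(-5/7:ℝ) * ((n:ℝ)^((2:ℝ)/7) * (n:ℝ)^((2:ℝ)/7)) = (n:ℝ)^(-1/7:ℝ) := by
      rw [← Real.rpow_add hn0, ← Real.rpow_add hn0]
      norm_num
    calc 6 * (n:ℝ)^(-5/7:ℝ) * (3 * ((7/2) * (n : ℝ) ^ ((2:ℝ)/7)) ^ 2)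
        = 441/2 * ((n:ℝ)^(-5/7:ℝ) * ((n:ℝ)^((2:ℝ)/7) * (n:ℝ)^((2:ℝ)/7))) := by ring
      _ = 441/2 * (n : ℝ) ^ (-1/7 : ℝ) := by rw [h1]
  rw [hfin]
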